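/- For every x ∈ (−L−β, L+β)^k, every eigenvalue λ of the symmetric matrix B(x) satisfies λ ≥ σ, where B(x) = γ^(−2)·diag(0, I_{k−1}) + w(x)·w(x)ᵀ and w(x) ∈ ℝ^k is the column vector with entries w(x)ⱼ = γ^(k−j)·(∂Φ₀/∂xⱼ)(x) for j = 1, …, k. (Proposition 'eig-B'.) -/
import Mathlib

open MeasureTheory

/-- Auxiliary scalar lemma: the secular-equation argument. -/
theorem eig_B_aux (σ C₁ C₂ g a S lam : ℝ)
    (hσ : 1 < σ) (hC₁ : 1 < C₁) (hC₂ : 1 < C₂)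
    (hg : g = C₁ * σ)
    (ha : C₂ * σ ≤ a ^ 2)
    (hS0 : 0 ≤ S) (hS : S ≤ (C₁ - 1) * (C₂ - 1) * σ)
    (hlam : lam < σ)
    (heq : lam * (g - lam) = a ^ 2 * (g - lam) - S * lam) : False := by
  have hσ0 : 0 < σ := by linarith
  have hglam : σ < g := by nlinarith
  have hga : 0 < g - lam := by nlinarith
  have ha2 : 0 < a ^ 2 := by nlinarith
  have hlam0 : 0 < lam := by
    by_contra h; push_neg at h
    nlinarith [mul_pos ha2 hga, mul_nonneg hS0 (neg_nonneg.mpr h)]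
  have h1 : (C₂ - 1) * σ < a ^ 2 - lam := by nlinarith
  have h2 : (C₁ - 1) * σ < g - lam := by nlinarith
  have h3 : S * lam ≤ (C₁ - 1) * (C₂ - 1) * σ * σ := by
    nlinarith [mul_le_mul_of_nonneg_left hlam.le hS0, mul_le_mul_of_nonneg_right hS hσ0.le]
  have h4 := mul_lt_mul'' h1 h2 (by nlinarith) (by nlinarith)
  nlinarith [h4, h3, heq]

set_option maxHeartbeats 1000000 in
/-- **Proposition `eig-B`.** For every `x` in the open cube, every (real) eigenvalue `λ`
of the symmetric matrix `B(x) = γ⁻²·diag(0, I_{k−1}) + w(x)·w(x)ᵀ`, where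
`w(x)ⱼ = γ^(k−j)·∂Φ₀/∂xⱼ(x)`, satisfies `λ ≥ σ`. -/
theorem eig_B (k : ℕ) (hk : 2 ≤ k)
    (L β σ C₁ C₂ : ℝ)
    (hL : 0 < L) (hβ : 0 < β) (hσ : 1 < σ) (hC₁ : 1 < C₁) (hC₂ : 1 < C₂)
    (γ : ℝ) (hγ : γ = (C₁ * σ) ^ (-(1 : ℝ) / 2))
    (Φ₀ : EuclideanSpace ℝ (Fin k) → ℝ)
    (cube : Set (EuclideanSpace ℝ (Fin k)))
    (hcube : cube = {x | ∀ j : Fin k, -(L + β) < x j ∧ x j < L + β})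
    (hΦ : ContDiffOn ℝ 2 Φ₀ cube)
    (hd1 : ∀ x ∈ cube,
      C₁ ^ (k - 1) * C₂ * σ ^ k
        ≤ (fderiv ℝ Φ₀ x (EuclideanSpace.single (⟨0, by omega⟩ : Fin k) 1)) ^ 2)
    (hdj : ∀ x ∈ cube, ∀ j : Fin k, 1 ≤ (j : ℕ) →
      (fderiv ℝ Φ₀ x (EuclideanSpace.single j 1)) ^ 2 ≤ (C₁ - 1) * (C₂ - 1) * σ / (k - 1))
    (w : EuclideanSpace ℝ (Fin k) → Fin k → ℝ)
    (hw : ∀ x (j : Fin k),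
      w x j = γ ^ (k - 1 - (j : ℕ)) * fderiv ℝ Φ₀ x (EuclideanSpace.single j 1))
    (B : EuclideanSpace ℝ (Fin k) → Matrix (Fin k) (Fin k) ℝ)
    (hB : ∀ x, B x = γ ^ (-2 : ℤ) •
        Matrix.diagonal (fun i : Fin k => if (i : ℕ) = 0 then (0 : ℝ) else 1)
      + Matrix.vecMulVec (w x) (w x)) :
    ∀ x ∈ cube, ∀ lam ∈ spectrum ℝ (B x), σ ≤ lam := by
  intro x hx lam hlam
  by_contra hcon
  push_neg at hcon
  -- basic positivity
  have hσ0 : (0:ℝ) < σ := by linarith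
  have hgpos : (0:ℝ) < C₁ * σ := by positivity
  have hγpos : 0 < γ := by rw [hγ]; positivity
  have hγ2 : γ ^ 2 = (C₁ * σ)⁻¹ := by
    rw [hγ, ← Real.rpow_natCast ((C₁ * σ) ^ (-(1:ℝ)/2)) 2, ← Real.rpow_mul hgpos.le]
    norm_num [Real.rpow_neg_one, mul_inv, mul_comm]
  have hg1 : (1:ℝ) < C₁ * σ := by nlinarith
  have hmul : γ ^ 2 * (C₁ * σ) = 1 := by
    rw [hγ2]; exact inv_mul_cancel₀ hgpos.ne'
  have hγle1 : γ ≤ 1 := by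
    by_contra h; push_neg at h
    have h1 : 1 < γ ^ 2 := by nlinarith
    nlinarith [mul_lt_mul_of_pos_right h1 hgpos]
  have hBz : γ ^ (-2 : ℤ) = C₁ * σ := by
    have h5 : γ ^ (-2 : ℤ) = (γ ^ 2)⁻¹ := by
      rw [zpow_neg, zpow_two, sq]
    rw [h5, hγ2, inv_inv]
  -- eigenvector
  have hdet : (algebraMap ℝ (Matrix (Fin k) (Fin k) ℝ) lam - B x).det = 0 := by
    by_contra h
    exact (spectrum.mem_iff.mp hlam) ((Matrix.isUnit_iff_isUnit_det _).mpr
      (isUnit_iff_ne_zero.mpr h))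
  obtain ⟨v, hv0, hv⟩ := (Matrix.exists_mulVec_eq_zero_iff).mpr hdet
  have hev : (B x).mulVec v = lam • v := by
    have h1 : (algebraMap ℝ (Matrix (Fin k) (Fin k) ℝ) lam) = lam • (1 : Matrix (Fin k) (Fin k) ℝ) :=
      Algebra.algebraMap_eq_smul_one lam
    rw [h1, Matrix.sub_mulVec, Matrix.smul_mulVec, Matrix.one_mulVec, sub_eq_zero] at hv
    exact hv.symm
  set i0 : Fin k := ⟨0, by omega⟩ with hi0
  set p : ℝ := Finset.univ.sum (fun j => w x j * v j) with hpdef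
  have hcomp : ∀ i : Fin k, (C₁ * σ) * (if (i : ℕ) = 0 then (0:ℝ) else 1) * v i + w x i * p = lam * v i := by
    intro i
    have := congrFun hev i
    rw [hB] at this
    rw [Matrix.add_mulVec, hBz] at this
    simp only [Matrix.smul_mulVec, Pi.add_apply, Pi.smul_apply, Matrix.mulVec_diagonal,
      smul_eq_mul, Pi.smul_apply, smul_eq_mul] at this
    have hvv : (Matrix.vecMulVec (w x) (w x)).mulVec v i = w x i * p := by
      simp only [Matrix.mulVec, dotProduct, Matrix.vecMulVec_apply, hpdef,
        Finset.mul_sum, mul_assoc]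
    rw [hvv] at this
    rw [← this]; ring
  have heq0 : w x i0 * p = lam * v i0 := by
    have := hcomp i0
    simp only [hi0] at this ⊢
    simpa using this
  have heqj : ∀ j : Fin k, j ≠ i0 → (C₁ * σ) * v j + w x j * p = lam * v j := by
    intro j hj
    have hjne : (j : ℕ) ≠ 0 := by
      intro h; apply hj; apply Fin.ext; simp [hi0, h]
    have := hcomp j
    simp only [if_neg hjne, mul_one] at this
    exact this
  set a : ℝ := w x i0 with hadef
  set S : ℝ := ∑ j ∈ Finset.univ.erase i0, (w x j) ^ 2 with hSdef
  -- bound on a²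
  have hk1 : (1:ℕ) ≤ k - 1 := by omega
  have ha : C₂ * σ ≤ a ^ 2 := by
    have hD := hd1 x hx
    have haw : a = γ ^ (k - 1) * fderiv ℝ Φ₀ x (EuclideanSpace.single i0 1) := by
      rw [hadef, hw]; norm_num [hi0]
    have hγpow : (γ ^ (k-1)) ^ 2 = ((C₁ * σ) ^ (k-1))⁻¹ := by
      rw [← pow_mul, mul_comm (k-1) 2, pow_mul, hγ2, inv_pow]
    have hsplit : C₁ ^ (k-1) * C₂ * σ ^ k = (C₁ * σ) ^ (k-1) * (C₂ * σ) := by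
      have hσk : σ ^ k = σ ^ (k-1) * σ := by
        rw [← pow_succ]; congr 1; omega
      rw [hσk, mul_pow]; ring
    have hpos : (0:ℝ) < (C₁ * σ) ^ (k-1) := by positivity
    rw [haw, mul_pow, hγpow]
    rw [hsplit] at hD
    have hrw : C₂ * σ = ((C₁ * σ) ^ (k-1))⁻¹ * ((C₁ * σ) ^ (k-1) * (C₂ * σ)) := by
      field_simp
    rw [hrw]
    exact mul_le_mul_of_nonneg_left hD (inv_nonneg.mpr hpos.le)
  have hS0 : 0 ≤ S := Finset.sum_nonneg fun j _ => sq_nonneg _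
  have hSb : S ≤ (C₁ - 1) * (C₂ - 1) * σ := by
    have hcard : ((Finset.univ.erase i0) : Finset (Fin k)).card = k - 1 := by
      rw [Finset.card_erase_of_mem (Finset.mem_univ _), Finset.card_univ, Fintype.card_fin]
    have hkR : (1:ℝ) ≤ (k:ℝ) - 1 := by
      have : (2:ℝ) ≤ (k:ℝ) := by exact_mod_cast hk
      linarith
    have hterm : ∀ j ∈ Finset.univ.erase i0, (w x j)^2 ≤ (C₁-1)*(C₂-1)*σ/((k:ℝ)-1) := by
      intro j hj
      have hjne : (j : ℕ) ≠ 0 := by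
        intro h
        exact (Finset.mem_erase.mp hj).1 (Fin.ext (by simp [hi0, h]))
      have hj1 : 1 ≤ (j : ℕ) := Nat.one_le_iff_ne_zero.mpr hjne
      have hD := hdj x hx j hj1
      rw [hw, mul_pow]
      have hγp : (γ ^ (k - 1 - (j:ℕ))) ^ 2 ≤ 1 := by
        have := pow_le_one₀ hγpos.le hγle1 (n := k - 1 - (j:ℕ))
        nlinarith [pow_pos hγpos (k - 1 - (j:ℕ))]
      have hDpos : 0 ≤ (fderiv ℝ Φ₀ x (EuclideanSpace.single j 1)) ^ 2 := sq_nonneg _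
      calc (γ ^ (k-1-(j:ℕ)))^2 * (fderiv ℝ Φ₀ x (EuclideanSpace.single j 1))^2
          ≤ 1 * (fderiv ℝ Φ₀ x (EuclideanSpace.single j 1))^2 :=
            mul_le_mul_of_nonneg_right hγp hDpos
        _ = _ := by rw [one_mul]
        _ ≤ (C₁-1)*(C₂-1)*σ/((k:ℝ)-1) := hD
    calc S ≤ (Finset.univ.erase i0).card • ((C₁-1)*(C₂-1)*σ/((k:ℝ)-1)) :=
          Finset.sum_le_card_nsmul _ _ _ hterm
      _ = ((k:ℝ)-1) * ((C₁-1)*(C₂-1)*σ/((k:ℝ)-1)) := by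
          rw [hcard, nsmul_eq_mul]
          congr 1
          have : (2:ℕ) ≤ k := hk
          push_cast [Nat.cast_sub (by omega : 1 ≤ k)]
          ring
      _ = (C₁-1)*(C₂-1)*σ := by field_simp
  have ha0 : a ≠ 0 := by
    intro h; rw [h] at ha; nlinarith
  have hglam : lam < C₁ * σ := by nlinarith
  -- case analysis on p
  by_cases hp : p = 0
  · -- p = 0
    have hvj : ∀ j : Fin k, j ≠ i0 → v j = 0 := by
      intro j hj
      have := heqj j hj
      rw [hp, mul_zero, add_zero] at this
      have h2 : (C₁ * σ - lam) * v j = 0 := by linarith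
      rcases mul_eq_zero.mp h2 with h | h
      · exfalso; linarith
      · exact h
    have hvi0 : v i0 ≠ 0 := by
      intro h
      apply hv0
      funext j
      by_cases hj : j = i0
      · rw [hj]; exact h
      · exact hvj j hj
    have hlam0 : lam = 0 := by
      have := heq0
      rw [hp, mul_zero] at this
      rcases mul_eq_zero.mp this.symm with h | h
      · exact h
      · exact absurd h hvi0
    -- then p = a * v i0 must be 0, but all other terms vanish
    have : p = a * v i0 := by
      rw [hpdef, ← Finset.add_sum_erase _ _ (Finset.mem_univ i0)]
      rw [Finset.sum_eq_zero (fun j hj => by rw [hvj j (Finset.mem_erase.mp hj).1, mul_zero])]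
      rw [add_zero, hadef]
    rw [hp] at this
    exact ha0 (by rcases mul_eq_zero.mp this.symm with h | h; exact h; exact absurd h hvi0)
  · -- p ≠ 0
    have hlamne : lam ≠ 0 := by
      intro h
      rw [h, zero_mul] at heq0
      rcases mul_eq_zero.mp heq0 with h' | h'
      · exact ha0 h'
      · exact hp h'
    have hgl : C₁ * σ - lam ≠ 0 := by intro h; nlinarith
    -- v j in terms of p
    have hvj : ∀ j : Fin k, j ≠ i0 → v j = -(w x j) * p / (C₁ * σ - lam) := by
      intro j hj
      rw [eq_div_iff hgl]
      linear_combination (heqj j hj)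
    have hvi0 : v i0 = a * p / lam := by
      rw [eq_div_iff hlamne]
      linear_combination -heq0
    -- secular equation
    have htermeq : ∀ j ∈ Finset.univ.erase i0,
        w x j * v j = (w x j) ^ 2 * (-p / (C₁ * σ - lam)) := by
      intro j hj
      rw [hvj j (Finset.mem_erase.mp hj).1]
      ring
    have hsum : p = a * v i0 + S * (-p / (C₁ * σ - lam)) := by
      conv_lhs => rw [hpdef]
      rw [← Finset.add_sum_erase _ _ (Finset.mem_univ i0),
        Finset.sum_congr rfl htermeq, ← Finset.sum_mul, ← hSdef, ← hadef]
    rw [hvi0] at hsum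
    have h2 : p * (lam * (C₁ * σ - lam)) = p * (a ^ 2 * (C₁ * σ - lam) - S * lam) := by
      conv_lhs => rw [hsum]
      field_simp
      ring
    have key : lam * (C₁ * σ - lam) = a ^ 2 * (C₁ * σ - lam) - S * lam :=
      mul_left_cancel₀ hp h2
    exact eig_B_aux σ C₁ C₂ (C₁ * σ) a S lam hσ hC₁ hC₂ rfl ha hS0 hSb hcon key
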